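/- Let G be a group, let k ≥ 2 be an integer, and let B, C be elements of G with B^k = 1 and C^k = 1. Then (BC)^k = [B,C] · ∏_{j=2}^{k-1} ( [C^{j-1}, B^j] · [B^j, C^j] ), where the product is taken in increasing order of j. In particular, (BC)^k is a product of 2k−3 commutators, each of whose arguments is a power of B or a power of C. -/

import Mathlib

open scoped commutatorElement

lemma stmt1_aux {G : Type*} [Group G] (B C : G) (n : ℕ) :
    ⁅B, C⁆ *
      (((List.range n).map
        (fun m => ⁅C ^ (m + 1), B ^ (m + 2)⁆ * ⁅B ^ (m + 2), C ^ (m + 2)⁆)).prod) =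
    (B * C) ^ (n + 1) * (B ^ (n + 1))⁻¹ * (C ^ (n + 1))⁻¹ := by
  induction n with
  | zero => simp [commutatorElement_def]
  | succ n ih =>
    rw [List.range_succ, List.map_append, List.prod_append, ← mul_assoc, ih]
    simp only [List.map_cons, List.map_nil, List.prod_cons, List.prod_nil,
      commutatorElement_def]
    group
    rw [show ((2:ℤ) + n) = (1 + n) + 1 by ring, zpow_add_one]
    group

/-- If `B^k = 1` and `C^k = 1` with `k ≥ 2`, then
`(BC)^k = ⁅B,C⁆ * ∏_{j=2}^{k-1} (⁅C^(j-1), B^j⁆ * ⁅B^j, C^j⁆)`,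
the product taken in increasing order of `j`.  In particular `(BC)^k` is a
product of `2k-3` commutators of powers of `B` and `C`. -/
theorem stmt1 {G : Type*} [Group G] (k : ℕ) (hk : 2 ≤ k) (B C : G)
    (hB : B ^ k = 1) (hC : C ^ k = 1) :
    (B * C) ^ k =
      ⁅B, C⁆ *
        (((List.range (k - 2)).map
          (fun m => ⁅C ^ (m + 1), B ^ (m + 2)⁆ * ⁅B ^ (m + 2), C ^ (m + 2)⁆)).prod) := by
  rw [stmt1_aux]
  have h1 : k - 2 + 1 = k - 1 := by omega
  rw [h1]
  have hB' : (B ^ (k - 1))⁻¹ = B := inv_eq_of_mul_eq_one_left (by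
    rw [← pow_succ']; rwa [Nat.sub_add_cancel (by omega)])
  have hC' : (C ^ (k - 1))⁻¹ = C := inv_eq_of_mul_eq_one_left (by
    rw [← pow_succ']; rwa [Nat.sub_add_cancel (by omega)])
  rw [hB', hC', mul_assoc, ← pow_succ, Nat.sub_add_cancel (by omega)]
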